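/- Let c be the real Banach space of convergent sequences with the sup norm, and let X = {(x, y, z) ∈ c ⊕_∞ c ⊕_∞ c : lim x + lim y + lim z = 0}. Then X is lush. -/

import Mathlib

open Filter Topology Metric
open scoped ENNReal

set_option maxHeartbeats 1000000
set_option synthInstance.maxHeartbeats 1000000

/-- The slice `S(B_X, f, ε) = {x ∈ B_X : Re f(x) > 1 - ε}`. -/
def lushSlice {𝕜 X : Type*} [RCLike 𝕜] [NormedAddCommGroup X] [NormedSpace 𝕜 X]
    (f : X →L[𝕜] 𝕜) (ε : ℝ) : Set X :=
  {x | ‖x‖ ≤ 1 ∧ 1 - ε < RCLike.re (f x)}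

/-- A Banach space is *lush* if for every `x, y` in the unit sphere and every `ε > 0` there is
a norm-one functional `f` such that `y` belongs to the slice `S(B_X, f, ε)` and the distance
from `x` to the convex hull of `𝕋 · S(B_X, f, ε)` is less than `ε`. -/
def IsLush (𝕜 X : Type*) [RCLike 𝕜] [NormedAddCommGroup X] [NormedSpace 𝕜 X]
    [NormedSpace ℝ X] [IsScalarTower ℝ 𝕜 X] : Prop :=
  ∀ x y : X, ‖x‖ = 1 → ‖y‖ = 1 → ∀ ε : ℝ, 0 < ε →
    ∃ f : X →L[𝕜] 𝕜, ‖f‖ = 1 ∧ y ∈ lushSlice f ε ∧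
      Metric.infDist x
        (convexHull ℝ {z | ∃ (θ : 𝕜) (w : X), ‖θ‖ = 1 ∧ w ∈ lushSlice f ε ∧ z = θ • w}) < ε

/-- The ambient space of `c ⊕_∞ c ⊕_∞ c`: triples of bounded real sequences with the
`ℓ_∞`-sum of the sup norms, `‖(x,y,z)‖ = max (‖x‖, ‖y‖, ‖z‖)`. -/
noncomputable abbrev BddSeqTriple : Type :=
  (lp (fun _ : ℕ => ℝ) ∞) × (lp (fun _ : ℕ => ℝ) ∞) × (lp (fun _ : ℕ => ℝ) ∞)

/-- The space `X = {(x,y,z) ∈ c ⊕_∞ c ⊕_∞ c : lim x + lim y + lim z = 0}`: the subspace of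
triples of *convergent* sequences whose limits add up to `0`, inside the sup-normed space of
triples of bounded sequences (so it carries exactly the norm of `c ⊕_∞ c ⊕_∞ c`). -/
noncomputable def limSumZeroSubspace : Submodule ℝ BddSeqTriple where
  carrier := {p | ∃ a b c : ℝ, Filter.Tendsto (⇑p.1) Filter.atTop (nhds a) ∧
    Filter.Tendsto (⇑p.2.1) Filter.atTop (nhds b) ∧
    Filter.Tendsto (⇑p.2.2) Filter.atTop (nhds c) ∧ a + b + c = 0}
  add_mem' := by
    rintro p q ⟨a, b, c, ha, hb, hc, habc⟩ ⟨a', b', c', ha', hb', hc', habc'⟩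
    refine ⟨a + a', b + b', c + c', ?_, ?_, ?_, by linarith⟩
    · first | exact ha.add ha' | (simp only [Prod.fst_add, Prod.snd_add, lp.coeFn_add]; exact ha.add ha')
    · first | exact hb.add hb' | (simp only [Prod.fst_add, Prod.snd_add, lp.coeFn_add]; exact hb.add hb')
    · first | exact hc.add hc' | (simp only [Prod.fst_add, Prod.snd_add, lp.coeFn_add]; exact hc.add hc')
  zero_mem' := ⟨0, 0, 0,
    by simp only [Prod.fst_zero, lp.coeFn_zero]; exact tendsto_const_nhds,
    by simp only [Prod.snd_zero, Prod.fst_zero, lp.coeFn_zero]; exact tendsto_const_nhds,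
    by simp only [Prod.snd_zero, lp.coeFn_zero]; exact tendsto_const_nhds, by ring⟩
  smul_mem' := by
    rintro r p ⟨a, b, c, ha, hb, hc, habc⟩
    refine ⟨r * a, r * b, r * c, ?_, ?_, ?_, by rw [← mul_add, ← mul_add, habc, mul_zero]⟩
    · simpa [lp.coeFn_smul, Pi.smul_def] using ha.const_mul r
    · simpa [lp.coeFn_smul, Pi.smul_def] using hb.const_mul r
    · simpa [lp.coeFn_smul, Pi.smul_def] using hc.const_mul r


section LushAux

/-- Abstract criterion: if `y` is in the slice of a norm-attaining functional `f` of norm `≤ 1`,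
and `x` lies on a segment between points of the ball where `f` takes the values `1` and `-1`,
then the lush condition holds at `(x, y, ε)` with witness `f`. -/
lemma lush_key {X : Type*} [NormedAddCommGroup X] [NormedSpace ℝ X]
    (x y u v : X) (f : X →L[ℝ] ℝ) (ε : ℝ) (hε : 0 < ε)
    (hy : ‖y‖ ≤ 1) (hfle : ‖f‖ ≤ 1) (hfy : 1 - ε < f y)
    (hu : ‖u‖ ≤ 1) (hv : ‖v‖ ≤ 1) (hfu : f u = 1) (hfv : f v = -1)
    (hx : x ∈ segment ℝ u v) :
    ∃ g : X →L[ℝ] ℝ, ‖g‖ = 1 ∧ y ∈ lushSlice g ε ∧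
      Metric.infDist x
        (convexHull ℝ {z | ∃ (θ : ℝ) (w : X), ‖θ‖ = 1 ∧ w ∈ lushSlice g ε ∧ z = θ • w}) < ε := by
  refine ⟨f, ?_, ⟨hy, by simpa using hfy⟩, ?_⟩
  · refine le_antisymm hfle ?_
    calc (1 : ℝ) = f u := hfu.symm
    _ ≤ ‖f u‖ := le_abs_self _
    _ ≤ ‖f‖ * ‖u‖ := f.le_opNorm u
    _ ≤ ‖f‖ * 1 := by
        have := norm_nonneg f
        nlinarith
    _ = ‖f‖ := mul_one _
  · have hu' : u ∈ {z | ∃ (θ : ℝ) (w : X), ‖θ‖ = 1 ∧ w ∈ lushSlice f ε ∧ z = θ • w} := by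
      refine ⟨1, u, norm_one, ⟨hu, by simp [hfu]; linarith⟩, (one_smul _ _).symm⟩
    have hv' : v ∈ {z | ∃ (θ : ℝ) (w : X), ‖θ‖ = 1 ∧ w ∈ lushSlice f ε ∧ z = θ • w} := by
      refine ⟨-1, -v, by simp, ⟨by simpa using hv, by simp [hfv]; linarith⟩, by simp⟩
    have : x ∈ convexHull ℝ {z | ∃ (θ : ℝ) (w : X), ‖θ‖ = 1 ∧ w ∈ lushSlice f ε ∧ z = θ • w} :=
      segment_subset_convexHull hu' hv' hx
    rw [Metric.infDist_zero_of_mem this]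
    exact hε

/-- The main construction: given a coordinate-like functional `g` on the ambient space, an
element `E` of the subspace with `g E = 1` along which perturbations keep the ball, the lush
condition holds. -/
lemma lush_case {Y : Type*} [NormedAddCommGroup Y] [NormedSpace ℝ Y]
    (S : Submodule ℝ Y) (g : Y →L[ℝ] ℝ) (E : Y)
    (hg : ∀ p : Y, |g p| ≤ ‖p‖) (hE : E ∈ S) (hgE : g E = 1)
    (hnorm : ∀ (p : Y) (c : ℝ), ‖p‖ ≤ 1 → |g p + c| ≤ 1 → ‖p + c • E‖ ≤ 1)
    (x y : ↥S) (hx : ‖x‖ = 1) (hy : ‖y‖ = 1) (ε : ℝ) (hε : 0 < ε)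
    (hgy : 1 - ε < |g ↑y|) :
    ∃ f : ↥S →L[ℝ] ℝ, ‖f‖ = 1 ∧ y ∈ lushSlice f ε ∧
      Metric.infDist x
        (convexHull ℝ {z | ∃ (θ : ℝ) (w : ↥S), ‖θ‖ = 1 ∧ w ∈ lushSlice f ε ∧ z = θ • w}) < ε := by
  set σ : ℝ := if 0 ≤ g ↑y then 1 else -1 with hσdef
  have hσ : σ = 1 ∨ σ = -1 := by unfold σ; split <;> simp
  have hσ2 : σ * σ = 1 := by rcases hσ with h | h <;> rw [h] <;> norm_num
  have hσy : σ * g ↑y = |g ↑y| := by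
    unfold σ; split
    · rw [one_mul, abs_of_nonneg ‹_›]
    · rw [abs_of_neg (by linarith [not_le.mp ‹_›]), neg_one_mul]
  set f : ↥S →L[ℝ] ℝ := σ • (g.comp S.subtypeL) with hfdef
  have hfval : ∀ z : ↥S, f z = σ * g ↑z := fun z => rfl
  have hfle : ‖f‖ ≤ 1 := by
    refine ContinuousLinearMap.opNorm_le_bound f zero_le_one fun z => ?_
    rw [hfval, one_mul]
    calc ‖σ * g ↑z‖ = |σ| * |g ↑z| := abs_mul _ _
    _ ≤ 1 * ‖(z : Y)‖ := by
        have h1 : |σ| = 1 := by rcases hσ with h | h <;> simp [h]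
        rw [h1]; exact mul_le_mul_of_nonneg_left (hg _) zero_le_one
    _ = ‖z‖ := by rw [one_mul, Submodule.norm_coe]
  set a : ℝ := g ↑x with hadef
  have ha : |a| ≤ 1 := by rw [← hx, ← Submodule.norm_coe]; exact hg _
  set E' : ↥S := ⟨E, hE⟩ with hE'def
  set u : ↥S := x + (σ - a) • E' with hudef
  set v : ↥S := x + (-σ - a) • E' with hvdef
  have hxle : ‖(x : Y)‖ ≤ 1 := by rw [Submodule.norm_coe, hx]
  have hucoe : (u : Y) = ↑x + (σ - a) • E := rfl
  have hvcoe : (v : Y) = ↑x + (-σ - a) • E := rfl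
  have hgu : g ↑u = σ := by rw [hucoe, map_add, map_smul, hgE, smul_eq_mul, mul_one, hadef]; ring
  have hgv : g ↑v = -σ := by rw [hvcoe, map_add, map_smul, hgE, smul_eq_mul, mul_one, hadef]; ring
  have hσabs : |σ| = 1 := by rcases hσ with h | h <;> simp [h]
  have hu1 : ‖u‖ ≤ 1 := by
    rw [Submodule.coe_norm, hucoe]
    refine hnorm _ _ hxle ?_
    rw [← hadef]; simpa using hσabs.le
  have hv1 : ‖v‖ ≤ 1 := by
    rw [Submodule.coe_norm, hvcoe]
    refine hnorm _ _ hxle ?_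
    rw [← hadef]
    have : a + (-σ - a) = -σ := by ring
    rw [this, abs_neg, hσabs]
  have hfu : f u = 1 := by rw [hfval, hgu, hσ2]
  have hfv : f v = -1 := by rw [hfval, hgv]; rw [← hσ2]; ring
  have hfy : 1 - ε < f y := by rw [hfval, hσy]; exact hgy
  set lam : ℝ := (1 + σ * a) / 2 with hlamdef
  have hσa : |σ * a| ≤ 1 := by rw [abs_mul, hσabs, one_mul]; exact ha
  have hlam0 : 0 ≤ lam := by rw [hlamdef]; cases' abs_le.mp hσa with h1 h2; linarith
  have hlam1 : 0 ≤ 1 - lam := by rw [hlamdef]; cases' abs_le.mp hσa with h1 h2; linarith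
  have hcoef : lam * (σ - a) + (1 - lam) * (-σ - a) = 0 := by
    rw [hlamdef]; linear_combination a * hσ2
  have hseg : x ∈ segment ℝ u v := by
    refine ⟨lam, 1 - lam, hlam0, hlam1, by ring, ?_⟩
    rw [hudef, hvdef]
    have : lam • (x + (σ - a) • E') + (1 - lam) • (x + (-σ - a) • E')
        = (lam + (1 - lam)) • x + (lam * (σ - a) + (1 - lam) * (-σ - a)) • E' := by
      simp only [smul_add, smul_smul, add_smul]
      abel
    rw [this, hcoef]
    simp
  exact lush_key x y u v f ε hε (le_of_eq hy) hfle hfy hu1 hv1 hfu hfv hseg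

/-- Evaluation at coordinate `n` of the first component. -/
noncomputable def ev1 (n : ℕ) : BddSeqTriple →L[ℝ] ℝ :=
  LinearMap.mkContinuous
    { toFun := fun p => p.1 n
      map_add' := by intro p q; simp [lp.coeFn_add]
      map_smul' := by intro c p; simp [lp.coeFn_smul] }
    1 (fun p => by
      simp only [one_mul, LinearMap.coe_mk, AddHom.coe_mk]
      exact (lp.norm_apply_le_norm ENNReal.top_ne_zero p.1 n).trans (norm_fst_le p))

/-- Evaluation at coordinate `n` of the second component. -/
noncomputable def ev2 (n : ℕ) : BddSeqTriple →L[ℝ] ℝ :=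
  LinearMap.mkContinuous
    { toFun := fun p => p.2.1 n
      map_add' := by intro p q; simp [lp.coeFn_add]
      map_smul' := by intro c p; simp [lp.coeFn_smul] }
    1 (fun p => by
      simp only [one_mul, LinearMap.coe_mk, AddHom.coe_mk]
      exact (lp.norm_apply_le_norm ENNReal.top_ne_zero p.2.1 n).trans
        ((norm_fst_le p.2).trans (norm_snd_le p)))

/-- Evaluation at coordinate `n` of the third component. -/
noncomputable def ev3 (n : ℕ) : BddSeqTriple →L[ℝ] ℝ :=
  LinearMap.mkContinuous
    { toFun := fun p => p.2.2 n
      map_add' := by intro p q; simp [lp.coeFn_add]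
      map_smul' := by intro c p; simp [lp.coeFn_smul] }
    1 (fun p => by
      simp only [one_mul, LinearMap.coe_mk, AddHom.coe_mk]
      exact (lp.norm_apply_le_norm ENNReal.top_ne_zero p.2.2 n).trans
        ((norm_snd_le p.2).trans (norm_snd_le p)))


lemma ev1_apply (n : ℕ) (p : BddSeqTriple) : ev1 n p = p.1 n := rfl
lemma ev2_apply (n : ℕ) (p : BddSeqTriple) : ev2 n p = p.2.1 n := rfl
lemma ev3_apply (n : ℕ) (p : BddSeqTriple) : ev3 n p = p.2.2 n := rfl

lemma ev1_single (n : ℕ) :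
    ev1 n ((lp.single (E := fun _ : ℕ => ℝ) ∞ n 1, 0, 0) : BddSeqTriple) = 1 := by
  rw [ev1_apply]; exact lp.single_apply_self ∞ n 1

lemma ev2_single (n : ℕ) :
    ev2 n ((0, lp.single (E := fun _ : ℕ => ℝ) ∞ n 1, 0) : BddSeqTriple) = 1 := by
  rw [ev2_apply]; exact lp.single_apply_self ∞ n 1

lemma ev3_single (n : ℕ) :
    ev3 n ((0, 0, lp.single (E := fun _ : ℕ => ℝ) ∞ n 1) : BddSeqTriple) = 1 := by
  rw [ev3_apply]; exact lp.single_apply_self ∞ n 1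

lemma single_tendsto (n : ℕ) :
    Tendsto (⇑(lp.single (E := fun _ : ℕ => ℝ) ∞ n 1)) atTop (nhds 0) := by
  have h : ∀ m, m ≥ n + 1 → lp.single (E := fun _ : ℕ => ℝ) ∞ n 1 m = 0 := by
    intro m hm
    exact lp.single_apply_ne ∞ n _ (by omega)
  exact tendsto_atTop_of_eventually_const h

lemma norm_lp_le_one {f : lp (fun _ : ℕ => ℝ) ∞} (h : ∀ m, |f m| ≤ 1) : ‖f‖ ≤ 1 :=
  lp.norm_le_of_forall_le zero_le_one h

lemma coord_le {f : lp (fun _ : ℕ => ℝ) ∞} (m : ℕ) : |f m| ≤ ‖f‖ :=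
  lp.norm_apply_le_norm ENNReal.top_ne_zero f m

lemma mod_norm_le (q : lp (fun _ : ℕ => ℝ) ∞) (n : ℕ) (c : ℝ)
    (hq : ‖q‖ ≤ 1) (hc : |q n + c| ≤ 1) :
    ‖q + c • lp.single (E := fun _ : ℕ => ℝ) ∞ n 1‖ ≤ 1 := by
  refine norm_lp_le_one fun m => ?_
  have happ : (q + c • lp.single (E := fun _ : ℕ => ℝ) ∞ n 1) m
      = q m + c * (lp.single (E := fun _ : ℕ => ℝ) ∞ n 1 m) := by
    simp [lp.coeFn_add, lp.coeFn_smul]; rfl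
  rw [happ]
  by_cases hm : m = n
  · subst hm
    rw [lp.single_apply_self, mul_one]
    exact hc
  · rw [lp.single_apply_ne ∞ n _ hm, mul_zero, add_zero]
    exact (coord_le m).trans hq

end LushAux

/-- The space `X = {(x,y,z) ∈ c ⊕_∞ c ⊕_∞ c : lim x + lim y + lim z = 0}` is lush. -/
theorem isLush_limSumZeroSubspace : IsLush ℝ ↥limSumZeroSubspace := by
  intro x y hx hy ε hε
  have hycoe : ‖(y : BddSeqTriple)‖ = 1 := by rw [Submodule.norm_coe, hy]
  have hlt : 1 - ε < ‖(y : BddSeqTriple)‖ := by rw [hycoe]; linarith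
  have hzero : Tendsto (⇑(0 : lp (fun _ : ℕ => ℝ) ∞)) atTop (nhds (0 : ℝ)) := by
    rw [lp.coeFn_zero]; exact tendsto_const_nhds
  rw [Prod.norm_def, Prod.norm_def] at hlt
  rcases lt_max_iff.mp hlt with h1 | h23
  · -- component 1
    rw [lp.norm_eq_ciSup] at h1
    obtain ⟨n, hn⟩ := exists_lt_of_lt_ciSup h1
    refine lush_case limSumZeroSubspace (ev1 n)
      ((lp.single (E := fun _ : ℕ => ℝ) ∞ n 1, 0, 0) : BddSeqTriple)
      (fun p => (lp.norm_apply_le_norm ENNReal.top_ne_zero p.1 n).trans (norm_fst_le p))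
      ⟨0, 0, 0, single_tendsto n, hzero, hzero, by ring⟩
      (ev1_single n) ?_ x y hx hy ε hε (by simpa [ev1_apply] using hn)
    intro p c hp hc
    have heq : p + c • ((lp.single (E := fun _ : ℕ => ℝ) ∞ n 1, 0, 0) : BddSeqTriple)
        = (p.1 + c • lp.single (E := fun _ : ℕ => ℝ) ∞ n 1, p.2) := by
      ext <;> simp
    rw [heq, norm_prod_le_iff]
    exact ⟨mod_norm_le p.1 n c ((norm_fst_le p).trans hp) hc, (norm_snd_le p).trans hp⟩
  rcases lt_max_iff.mp h23 with h2 | h3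
  · -- component 2
    rw [lp.norm_eq_ciSup] at h2
    obtain ⟨n, hn⟩ := exists_lt_of_lt_ciSup h2
    refine lush_case limSumZeroSubspace (ev2 n)
      ((0, lp.single (E := fun _ : ℕ => ℝ) ∞ n 1, 0) : BddSeqTriple)
      (fun p => (lp.norm_apply_le_norm ENNReal.top_ne_zero p.2.1 n).trans
        ((norm_fst_le p.2).trans (norm_snd_le p)))
      ⟨0, 0, 0, hzero, single_tendsto n, hzero, by ring⟩
      (ev2_single n) ?_ x y hx hy ε hε (by simpa [ev2_apply] using hn)
    intro p c hp hc
    have heq : p + c • ((0, lp.single (E := fun _ : ℕ => ℝ) ∞ n 1, 0) : BddSeqTriple)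
        = (p.1, p.2.1 + c • lp.single (E := fun _ : ℕ => ℝ) ∞ n 1, p.2.2) := by
      ext <;> simp
    rw [heq, norm_prod_le_iff]
    refine ⟨(norm_fst_le p).trans hp, ?_⟩
    rw [norm_prod_le_iff]
    exact ⟨mod_norm_le p.2.1 n c (((norm_fst_le p.2).trans (norm_snd_le p)).trans hp) hc,
      ((norm_snd_le p.2).trans (norm_snd_le p)).trans hp⟩
  · -- component 3
    rw [lp.norm_eq_ciSup] at h3
    obtain ⟨n, hn⟩ := exists_lt_of_lt_ciSup h3
    refine lush_case limSumZeroSubspace (ev3 n)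
      ((0, 0, lp.single (E := fun _ : ℕ => ℝ) ∞ n 1) : BddSeqTriple)
      (fun p => (lp.norm_apply_le_norm ENNReal.top_ne_zero p.2.2 n).trans
        ((norm_snd_le p.2).trans (norm_snd_le p)))
      ⟨0, 0, 0, hzero, hzero, single_tendsto n, by ring⟩
      (ev3_single n) ?_ x y hx hy ε hε (by simpa [ev3_apply] using hn)
    intro p c hp hc
    have heq : p + c • ((0, 0, lp.single (E := fun _ : ℕ => ℝ) ∞ n 1) : BddSeqTriple)
        = (p.1, p.2.1, p.2.2 + c • lp.single (E := fun _ : ℕ => ℝ) ∞ n 1) := by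
      ext <;> simp
    rw [heq, norm_prod_le_iff]
    refine ⟨(norm_fst_le p).trans hp, ?_⟩
    rw [norm_prod_le_iff]
    exact ⟨((norm_fst_le p.2).trans (norm_snd_le p)).trans hp,
      mod_norm_le p.2.2 n c (((norm_snd_le p.2).trans (norm_snd_le p)).trans hp) hc⟩
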